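/- Let θ > 0, ν̄ > 0, τ > 0, k₀ > 0, let ε satisfy 0 < ε ≤ θ⁻¹(1 + λ_max(S))⁻¹, and let σ ≥ 2θ(1 + λ_max(S)). Let p̂ ∈ ℝ^n, set d := p̂ − P_B(p̂), let γ_1,…,γ_N ∈ [0,1], let K be a real n×n matrix, and let v, ν ∈ ℝ^n with ‖v‖ ≤ θ and ‖ν‖ ≤ ν̄. Define H := ⟨d, −(ε⁻¹ I + Σ_{i=1}^N γ_i Q_i⁻¹) d + K v + ν⟩ + (1/τ) Tr(Lᵀ K), where L := τ (−Σ_{i=1}^N γ_i Q_i⁻¹ d + ν) vᵀ − τ σ_s(‖K‖_F) K. Then H ≤ −(1/(2ε)) ‖d‖² − (σ/4) ‖K‖_F² + ν̄ ‖d‖ + ν̄ θ ‖K‖_F + (σ/2) k₀². -/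

import Mathlib

open scoped RealInnerProductSpace
open Matrix

noncomputable section

/-- The action of a real `n × n` matrix on Euclidean space. -/
def mvec {n : ℕ} (M : Matrix (Fin n) (Fin n) ℝ) (x : EuclideanSpace ℝ (Fin n)) :
    EuclideanSpace ℝ (Fin n) :=
  Matrix.toEuclideanLin M x

/-- The saturation function `σ_s` of the adaptive nudge mechanism. -/
def sigs (σ k0 u : ℝ) : ℝ :=
  if u < k0 then 0 else if u ≤ 2 * k0 then σ * (u / k0 - 1) else σ

/-- The Frobenius norm `‖M‖_F = √(Tr (Mᵀ M))` of a real matrix. -/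
def frob {n : ℕ} (M : Matrix (Fin n) (Fin n) ℝ) : ℝ :=
  Real.sqrt ((Mᵀ * M).trace)

/- ---------- auxiliary lemmas ---------- -/

lemma mvec_apply {n : ℕ} (M : Matrix (Fin n) (Fin n) ℝ) (x : EuclideanSpace ℝ (Fin n)) (i : Fin n) :
    mvec M x i = ∑ j, M i j * x j := rfl

lemma inner_mvec {n : ℕ} (M : Matrix (Fin n) (Fin n) ℝ) (x y : EuclideanSpace ℝ (Fin n)) :
    ⟪x, mvec M y⟫ = ∑ i, ∑ j, x i * (M i j * y j) := by
  simp [PiLp.inner_apply, mvec_apply, Finset.mul_sum]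
  refine Finset.sum_congr rfl fun i _ => ?_
  rw [Finset.sum_mul]
  exact Finset.sum_congr rfl fun j _ => by ring

lemma mvec_add {n : ℕ} (M M' : Matrix (Fin n) (Fin n) ℝ) (x : EuclideanSpace ℝ (Fin n)) :
    mvec (M + M') x = mvec M x + mvec M' x := by simp [mvec]

lemma mvec_smul {n : ℕ} (c : ℝ) (M : Matrix (Fin n) (Fin n) ℝ) (x : EuclideanSpace ℝ (Fin n)) :
    mvec (c • M) x = c • mvec M x := by simp [mvec]

lemma mvec_one {n : ℕ} (x : EuclideanSpace ℝ (Fin n)) :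
    mvec (1 : Matrix (Fin n) (Fin n) ℝ) x = x := by
  ext i; simp [mvec_apply, Matrix.one_apply, Finset.sum_ite_eq]

lemma mvec_addv {n : ℕ} (M : Matrix (Fin n) (Fin n) ℝ) (x y : EuclideanSpace ℝ (Fin n)) :
    mvec M (x + y) = mvec M x + mvec M y := by simp [mvec]

lemma mvec_smulv {n : ℕ} (c : ℝ) (M : Matrix (Fin n) (Fin n) ℝ) (x : EuclideanSpace ℝ (Fin n)) :
    mvec M (c • x) = c • mvec M x := by simp [mvec]

lemma mvec_sum {n N : ℕ} (M : Fin N → Matrix (Fin n) (Fin n) ℝ) (x : EuclideanSpace ℝ (Fin n)) :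
    mvec (∑ i, M i) x = ∑ i, mvec (M i) x := by
  simp [mvec]

lemma trace_KtK {n : ℕ} (K : Matrix (Fin n) (Fin n) ℝ) :
    (Kᵀ * K).trace = ∑ j, ∑ i, K i j ^ 2 := by
  simp [Matrix.trace, Matrix.mul_apply, Matrix.diag, sq]

lemma trace_KtK_nonneg {n : ℕ} (K : Matrix (Fin n) (Fin n) ℝ) : 0 ≤ (Kᵀ * K).trace := by
  rw [trace_KtK]; positivity

lemma frob_nonneg {n : ℕ} (K : Matrix (Fin n) (Fin n) ℝ) : 0 ≤ frob K := Real.sqrt_nonneg _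

lemma frob_sq {n : ℕ} (K : Matrix (Fin n) (Fin n) ℝ) : frob K ^ 2 = (Kᵀ * K).trace :=
  Real.sq_sqrt (trace_KtK_nonneg K)

lemma trace_outer {n : ℕ} (w v : EuclideanSpace ℝ (Fin n)) (K : Matrix (Fin n) (Fin n) ℝ) :
    ((Matrix.vecMulVec w v)ᵀ * K).trace = ⟪w, mvec K v⟫ := by
  simp [Matrix.trace, Matrix.mul_apply, Matrix.diag, Matrix.vecMulVec_apply,
    PiLp.inner_apply, mvec_apply, Finset.mul_sum]
  rw [Finset.sum_comm]
  exact Finset.sum_congr rfl fun i _ => by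
    rw [Finset.sum_mul]; exact Finset.sum_congr rfl fun j _ => by ring

lemma norm_mvec_le {n : ℕ} (K : Matrix (Fin n) (Fin n) ℝ) (v : EuclideanSpace ℝ (Fin n)) :
    ‖mvec K v‖ ≤ frob K * ‖v‖ := by
  have h1 : ‖mvec K v‖ ^ 2 ≤ frob K ^ 2 * ‖v‖ ^ 2 := by
    rw [frob_sq, trace_KtK]
    have hn : ‖mvec K v‖ ^ 2 = ∑ i, (∑ j, K i j * v j) ^ 2 := by
      rw [EuclideanSpace.norm_eq, Real.sq_sqrt (by positivity)]
      simp [mvec_apply]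
    have hv : ‖v‖ ^ 2 = ∑ j, v j ^ 2 := by
      rw [EuclideanSpace.norm_eq, Real.sq_sqrt (by positivity)]; simp
    rw [hn, hv, Finset.sum_comm (s := Finset.univ) (t := Finset.univ), Finset.sum_mul]
    apply Finset.sum_le_sum
    intro i _
    calc (∑ j, K i j * v j) ^ 2 ≤ (∑ j, K i j ^ 2) * (∑ j, v j ^ 2) :=
          Finset.sum_mul_sq_le_sq_mul_sq Finset.univ _ _
      _ = _ := rfl
  nlinarith [norm_nonneg (mvec K v), mul_nonneg (frob_nonneg K) (norm_nonneg v)]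

lemma mvec_eigen {n : ℕ} {S : Matrix (Fin n) (Fin n) ℝ} (hSH : S.IsHermitian) (i : Fin n) :
    mvec S (hSH.eigenvectorBasis i) = hSH.eigenvalues i • hSH.eigenvectorBasis i := by
  have := hSH.mulVec_eigenvectorBasis i
  ext j
  have := congrFun this j
  simpa [mvec, Matrix.toEuclideanLin_apply] using this

lemma quad_le_lam {n : ℕ} {S : Matrix (Fin n) (Fin n) ℝ} (hSH : S.IsHermitian)
    (lam : ℝ) (hlam : ∀ i, hSH.eigenvalues i ≤ lam) (x : EuclideanSpace ℝ (Fin n)) :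
    ⟪x, mvec S x⟫ ≤ lam * ‖x‖ ^ 2 := by
  set b := hSH.eigenvectorBasis
  have hx : x = ∑ i, ⟪b i, x⟫ • b i := (b.sum_repr' x).symm
  have hparse : ‖x‖ ^ 2 = ∑ i, ⟪b i, x⟫ ^ 2 := by
    rw [← real_inner_self_eq_norm_sq]
    conv_lhs => rw [hx]
    rw [sum_inner]
    apply Finset.sum_congr rfl
    intro i _
    rw [real_inner_smul_left, ← hx, sq]
  have hmv : mvec S x = ∑ i, (⟪b i, x⟫ * hSH.eigenvalues i) • b i := by
    conv_lhs => rw [hx]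
    have : mvec S (∑ i, ⟪b i, x⟫ • b i) = ∑ i, ⟪b i, x⟫ • mvec S (b i) := by
      simp only [mvec]; rw [map_sum]; simp
    rw [this]
    apply Finset.sum_congr rfl
    intro i _
    rw [mvec_eigen hSH i, smul_smul]
  rw [hmv, inner_sum, hparse, Finset.mul_sum]
  apply Finset.sum_le_sum
  intro i _
  rw [real_inner_smul_right]
  have hcomm : ⟪x, b i⟫ = ⟪b i, x⟫ := real_inner_comm _ _
  rw [hcomm]
  have h2 : ⟪b i, x⟫ * hSH.eigenvalues i * ⟪b i, x⟫ = hSH.eigenvalues i * ⟪b i, x⟫ ^ 2 := by ring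
  rw [h2]
  exact mul_le_mul_of_nonneg_right (hlam i) (sq_nonneg _)

lemma inner_mvec_symm {n : ℕ} {A : Matrix (Fin n) (Fin n) ℝ} (hsym : Aᵀ = A)
    (x y : EuclideanSpace ℝ (Fin n)) : ⟪x, mvec A y⟫ = ⟪y, mvec A x⟫ := by
  rw [inner_mvec, inner_mvec, Finset.sum_comm]
  apply Finset.sum_congr rfl; intro i _
  apply Finset.sum_congr rfl; intro j _
  have : A i j = A j i := by conv_lhs => rw [← hsym, Matrix.transpose_apply]
  rw [this]; ring

lemma psd_cs {n : ℕ} {A : Matrix (Fin n) (Fin n) ℝ} (hsym : Aᵀ = A)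
    (hpos : ∀ x, 0 ≤ ⟪x, mvec A x⟫) (x y : EuclideanSpace ℝ (Fin n)) :
    ⟪x, mvec A y⟫ ^ 2 ≤ ⟪x, mvec A x⟫ * ⟪y, mvec A y⟫ := by
  have key : ∀ t : ℝ, 0 ≤ ⟪y, mvec A y⟫ * (t * t) + (2 * ⟪x, mvec A y⟫) * t + ⟪x, mvec A x⟫ := by
    intro t
    have h := hpos (x + t • y)
    rw [mvec_addv, mvec_smulv, inner_add_left, inner_add_right, inner_add_right,
      real_inner_smul_left, real_inner_smul_left, real_inner_smul_right,
      real_inner_smul_right, inner_mvec_symm hsym y x] at h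
    nlinarith [h]
  have := discrim_le_zero (a := ⟪y, mvec A y⟫) (b := 2 * ⟪x, mvec A y⟫)
    (c := ⟪x, mvec A x⟫) key
  rw [discrim] at this
  nlinarith [this]

lemma psd_inner {n : ℕ} {M : Matrix (Fin n) (Fin n) ℝ} (hM : M.PosSemidef)
    (x : EuclideanSpace ℝ (Fin n)) : 0 ≤ ⟪x, mvec M x⟫ := by
  have h := hM.dotProduct_mulVec_nonneg (x : Fin n → ℝ)
  rw [inner_mvec]
  simpa [dotProduct, Matrix.mulVec, Finset.mul_sum] using h

lemma neg_le_of_sq_le {X B : ℝ} (h : X ^ 2 ≤ B ^ 2) (hB : 0 ≤ B) : -X ≤ B := by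
  nlinarith [sq_nonneg (X + B)]

lemma sat_lemma (σ k0 b : ℝ) (hσ : 0 ≤ σ) (hk0 : 0 < k0) (hb : 0 ≤ b) :
    σ / 2 * b ^ 2 - sigs σ k0 b * b ^ 2 ≤ σ / 2 * k0 ^ 2 := by
  unfold sigs
  split_ifs with h1 h2
  · have hb2 : b ^ 2 ≤ k0 ^ 2 := by nlinarith
    nlinarith [mul_nonneg hσ (sub_nonneg.mpr hb2)]
  · push_neg at h1
    have h5 : σ * (b / k0 - 1) * b ^ 2 = σ * (b - k0) * b ^ 2 / k0 := by
      field_simp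
    have key' : 0 ≤ σ * ((b - k0) ^ 2 * (2 * b + k0)) :=
      mul_nonneg hσ (mul_nonneg (sq_nonneg _) (by linarith))
    have h6 : σ / 2 * b ^ 2 - σ / 2 * k0 ^ 2 ≤ σ * (b - k0) * b ^ 2 / k0 := by
      rw [le_div_iff₀ hk0]; nlinarith [key']
    linarith [h5, h6]
  · push_neg at h1 h2
    nlinarith [mul_nonneg hσ (mul_nonneg hb hb), mul_nonneg hσ (sq_nonneg k0)]

set_option maxHeartbeats 1000000 in
/-- The key dissipation inequality for the adaptive nudge mechanism:
with `d = p̂ − P_B(p̂)`, `γ_i ∈ [0,1]`, `‖v‖ ≤ θ`, `‖ν‖ ≤ ν̄`,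
`0 < ε ≤ θ⁻¹(1 + λ_max(S))⁻¹` and `σ ≥ 2θ(1 + λ_max(S))`, the quantity
`H = ⟨d, −(ε⁻¹ I + ∑ γ_i (Q i)⁻¹) d + K v + ν⟩ + (1/τ) Tr(Lᵀ K)` with
`L = τ (−∑ γ_i (Q i)⁻¹ d + ν) vᵀ − τ σ_s(‖K‖_F) K` satisfies
`H ≤ −(1/(2ε))‖d‖² − (σ/4)‖K‖_F² + ν̄‖d‖ + ν̄ θ ‖K‖_F + (σ/2) k₀²`. -/
theorem statement_15 (n N : ℕ) (hn : 0 < n) (hN : 0 < N)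
    (Q : Fin N → Matrix (Fin n) (Fin n) ℝ) (hQ : ∀ i, (Q i).PosDef)
    (S : Matrix (Fin n) (Fin n) ℝ) (hS : S = ∑ i, (Q i)⁻¹) (hSH : S.IsHermitian)
    (p0 : EuclideanSpace ℝ (Fin n)) (δbar : ℝ) (hδ : 0 < δbar)
    (B : Set (EuclideanSpace ℝ (Fin n))) (hB : B = Metric.closedBall p0 δbar)
    (P : EuclideanSpace ℝ (Fin n) → EuclideanSpace ℝ (Fin n))
    (hP : ∀ x, P x ∈ B ∧ ∀ y ∈ B, ‖x - P x‖ ≤ ‖x - y‖)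
    (θ νbar τ k0 ε σ : ℝ) (hθ : 0 < θ) (hνbar : 0 < νbar) (hτ : 0 < τ)
    (hk0 : 0 < k0)
    (lammax : ℝ) (hmax : lammax = ⨆ i, hSH.eigenvalues i)
    (hε : 0 < ε) (hε' : ε ≤ θ⁻¹ * (1 + lammax)⁻¹)
    (hσ : 2 * θ * (1 + lammax) ≤ σ)
    (phat : EuclideanSpace ℝ (Fin n))
    (d : EuclideanSpace ℝ (Fin n)) (hd : d = phat - P phat)
    (γ : Fin N → ℝ) (hγ : ∀ i, γ i ∈ Set.Icc (0 : ℝ) 1)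
    (K : Matrix (Fin n) (Fin n) ℝ)
    (v ν : EuclideanSpace ℝ (Fin n)) (hv : ‖v‖ ≤ θ) (hν : ‖ν‖ ≤ νbar)
    (L : Matrix (Fin n) (Fin n) ℝ)
    (hL : L = τ • Matrix.vecMulVec (-mvec (∑ i, γ i • (Q i)⁻¹) d + ν) v -
        (τ * sigs σ k0 (frob K)) • K)
    (H : ℝ)
    (hH : H = ⟪d, -mvec (ε⁻¹ • (1 : Matrix (Fin n) (Fin n) ℝ) + ∑ i, γ i • (Q i)⁻¹) d +
          mvec K v + ν⟫ + (1 / τ) * (Lᵀ * K).trace) :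
    H ≤ -(1 / (2 * ε)) * ‖d‖ ^ 2 - (σ / 4) * frob K ^ 2 + νbar * ‖d‖ +
      νbar * θ * frob K + (σ / 2) * k0 ^ 2 := by
  have hQinv : ∀ i, ((Q i)⁻¹).PosSemidef := fun i => (hQ i).posSemidef.inv
  set A := ∑ i, γ i • (Q i)⁻¹ with hA
  set w := mvec K v with hw
  set b := frob K with hbdef
  set u := sigs σ k0 b with hu
  set a := ‖d‖ with ha
  -- basic positivity facts
  have hb0 : 0 ≤ b := frob_nonneg K
  have ha0 : 0 ≤ a := norm_nonneg d
  -- eigenvalue facts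
  have hSpsd : S.PosSemidef := by
    refine Matrix.PosSemidef.of_dotProduct_mulVec_nonneg hSH fun x => ?_
    rw [hS]
    have hmv : (∑ i, (Q i)⁻¹) *ᵥ x = ∑ i, ((Q i)⁻¹ *ᵥ x) := by
      ext j
      simp only [Matrix.mulVec, dotProduct, Finset.sum_apply, Matrix.sum_apply,
        Finset.sum_mul]
      rw [Finset.sum_comm]
    rw [hmv]
    have hdp : star x ⬝ᵥ (∑ i, ((Q i)⁻¹ *ᵥ x)) = ∑ i, star x ⬝ᵥ ((Q i)⁻¹ *ᵥ x) := by
      simp [dotProduct, Finset.sum_apply, Finset.mul_sum]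
      rw [Finset.sum_comm]
    rw [hdp]
    exact Finset.sum_nonneg fun i _ => (hQinv i).dotProduct_mulVec_nonneg x
  have hlam_le : ∀ i, hSH.eigenvalues i ≤ lammax := by
    intro i
    rw [hmax]
    exact le_ciSup (Set.Finite.bddAbove (Set.finite_range _)) i
  have hlam0 : 0 ≤ lammax := by
    have i0 : Fin n := ⟨0, hn⟩
    exact le_trans (hSpsd.eigenvalues_nonneg i0) (hlam_le i0)
  have h1lam : (0 : ℝ) < 1 + lammax := by linarith
  -- quadratic form facts about A
  have hγ0 : ∀ i, 0 ≤ γ i := fun i => (hγ i).1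
  have hγ1 : ∀ i, γ i ≤ 1 := fun i => (hγ i).2
  have hAq : ∀ x : EuclideanSpace ℝ (Fin n),
      ⟪x, mvec A x⟫ = ∑ i, γ i * ⟪x, mvec (Q i)⁻¹ x⟫ := by
    intro x
    rw [hA, mvec_sum (fun i => γ i • (Q i)⁻¹) x, inner_sum]
    apply Finset.sum_congr rfl
    intro i _
    rw [mvec_smul, real_inner_smul_right]
  have hApos : ∀ x : EuclideanSpace ℝ (Fin n), 0 ≤ ⟪x, mvec A x⟫ := by
    intro x
    rw [hAq]
    exact Finset.sum_nonneg fun i _ => mul_nonneg (hγ0 i) (psd_inner (hQinv i) x)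
  have hAle : ∀ x : EuclideanSpace ℝ (Fin n), ⟪x, mvec A x⟫ ≤ lammax * ‖x‖ ^ 2 := by
    intro x
    have h1 : ⟪x, mvec A x⟫ ≤ ⟪x, mvec S x⟫ := by
      rw [hAq, hS, mvec_sum, inner_sum]
      apply Finset.sum_le_sum
      intro i _
      have := psd_inner (hQinv i) x
      nlinarith [hγ1 i, this]
    exact h1.trans (quad_le_lam hSH lammax hlam_le x)
  have hAsym : Aᵀ = A := by
    rw [hA, Matrix.transpose_sum]
    apply Finset.sum_congr rfl
    intro i _
    rw [Matrix.transpose_smul]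
    congr 1
    have h := (hQinv i).1
    rw [Matrix.IsHermitian, Matrix.conjTranspose_eq_transpose_of_trivial] at h; exact h
  -- rewrite H
  have hmv1 : mvec (ε⁻¹ • (1 : Matrix (Fin n) (Fin n) ℝ) + A) d = ε⁻¹ • d + mvec A d := by
    rw [mvec_add, mvec_smul, mvec_one]
  have hinner : ⟪d, -mvec (ε⁻¹ • (1 : Matrix (Fin n) (Fin n) ℝ) + A) d + w + ν⟫ =
      -(ε⁻¹ * a ^ 2) - ⟪d, mvec A d⟫ + ⟪d, w⟫ + ⟪d, ν⟫ := by
    rw [hmv1]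
    rw [inner_add_right, inner_add_right, inner_neg_right, inner_add_right,
      real_inner_smul_right, real_inner_self_eq_norm_sq]
    ring
  have htr : (1 / τ) * (Lᵀ * K).trace = ⟪ν, w⟫ - ⟪mvec A d, w⟫ - u * b ^ 2 := by
    rw [hL]
    have hmat : (τ • Matrix.vecMulVec (-mvec A d + ν) v - (τ * u) • K)ᵀ * K =
        τ • ((Matrix.vecMulVec (-mvec A d + ν) v)ᵀ * K) - (τ * u) • (Kᵀ * K) := by
      rw [Matrix.transpose_sub, Matrix.transpose_smul, Matrix.transpose_smul,
        Matrix.sub_mul, Matrix.smul_mul, Matrix.smul_mul]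
    rw [hmat, Matrix.trace_sub, Matrix.trace_smul, Matrix.trace_smul, trace_outer, ← frob_sq]
    rw [inner_add_left, inner_neg_left]
    rw [smul_eq_mul, smul_eq_mul, ← hbdef]
    field_simp
    ring
  have hH' : H = -(ε⁻¹ * a ^ 2) - ⟪d, mvec A d⟫ + ⟪d, w⟫ + ⟪d, ν⟫ +
      (⟪ν, w⟫ - ⟪mvec A d, w⟫ - u * b ^ 2) := by
    rw [hH, hinner, htr]
  -- bounds
  have hwn : ‖w‖ ≤ b * θ := by
    calc ‖w‖ ≤ frob K * ‖v‖ := norm_mvec_le K v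
      _ ≤ b * θ := by
          rw [← hbdef]
          exact mul_le_mul_of_nonneg_left hv hb0
  have hwn0 : 0 ≤ ‖w‖ := norm_nonneg w
  have hbθ : 0 ≤ b * θ := mul_nonneg hb0 hθ.le
  have hdw : ⟪d, w⟫ ≤ a * (b * θ) := by
    calc ⟪d, w⟫ ≤ ‖d‖ * ‖w‖ := real_inner_le_norm d w
      _ ≤ a * (b * θ) := by
          rw [← ha]
          exact mul_le_mul_of_nonneg_left hwn ha0
  have hdν : ⟪d, ν⟫ ≤ a * νbar := by
    calc ⟪d, ν⟫ ≤ ‖d‖ * ‖ν‖ := real_inner_le_norm d ν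
      _ ≤ a * νbar := mul_le_mul_of_nonneg_left hν ha0
  have hνw : ⟪ν, w⟫ ≤ νbar * (b * θ) := by
    calc ⟪ν, w⟫ ≤ ‖ν‖ * ‖w‖ := real_inner_le_norm ν w
      _ ≤ νbar * (b * θ) := mul_le_mul hν hwn hwn0 hνbar.le
  -- Cauchy-Schwarz bound for ⟪mvec A d, w⟫
  have hAdw : -⟪mvec A d, w⟫ ≤ lammax * (a * (b * θ)) := by
    have hcs := psd_cs hAsym hApos w d
    have hqw := hAle w
    have hqd := hAle d
    have hqw0 := hApos w
    have hqd0 := hApos d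
    have hsq : ⟪w, mvec A d⟫ ^ 2 ≤ (lammax * ‖w‖ * a) ^ 2 := by
      calc ⟪w, mvec A d⟫ ^ 2 ≤ ⟪w, mvec A w⟫ * ⟪d, mvec A d⟫ := hcs
        _ ≤ (lammax * ‖w‖ ^ 2) * (lammax * a ^ 2) := by
            apply mul_le_mul hqw (by rw [← ha] at hqd; exact hqd) hqd0
            exact mul_nonneg hlam0 (sq_nonneg _)
        _ = (lammax * ‖w‖ * a) ^ 2 := by ring
    have hB0 : 0 ≤ lammax * ‖w‖ * a := mul_nonneg (mul_nonneg hlam0 hwn0) ha0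
    have h1 : -⟪w, mvec A d⟫ ≤ lammax * ‖w‖ * a := neg_le_of_sq_le hsq hB0
    have h2 : ⟪mvec A d, w⟫ = ⟪w, mvec A d⟫ := real_inner_comm _ _
    rw [h2]
    calc -⟪w, mvec A d⟫ ≤ lammax * ‖w‖ * a := h1
      _ ≤ lammax * (b * θ) * a := by
          apply mul_le_mul_of_nonneg_right _ ha0
          exact mul_le_mul_of_nonneg_left hwn hlam0
      _ = lammax * (a * (b * θ)) := by ring
  -- scalar combination
  have hεc : ε * (θ * (1 + lammax)) ≤ 1 := by
    have hc : (0 : ℝ) < θ * (1 + lammax) := mul_pos hθ h1lam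
    have := mul_le_mul_of_nonneg_right hε' hc.le
    calc ε * (θ * (1 + lammax)) ≤ θ⁻¹ * (1 + lammax)⁻¹ * (θ * (1 + lammax)) := this
      _ = 1 := by field_simp
  set c : ℝ := θ * (1 + lammax) with hc
  have hc0 : 0 < c := mul_pos hθ h1lam
  have hσ0 : 0 ≤ σ := by nlinarith
  have hamgm : c * a * b ≤ 1 / (2 * ε) * a ^ 2 + c / 2 * b ^ 2 := by
    have h1 : 0 ≤ (a - ε * c * b) ^ 2 := sq_nonneg _
    have h2 : 0 ≤ ε * ((1 - ε * c) * (c * b ^ 2)) :=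
      mul_nonneg hε.le (mul_nonneg (by linarith) (mul_nonneg hc0.le (sq_nonneg b)))
    have h2ε : (0:ℝ) < 2 * ε := by linarith
    have key : 2 * ε * (c * a * b) ≤ 2 * ε * (1 / (2 * ε) * a ^ 2 + c / 2 * b ^ 2) := by
      have e : 2 * ε * (1 / (2 * ε) * a ^ 2 + c / 2 * b ^ 2) = a ^ 2 + ε * c * b ^ 2 := by
        field_simp
      rw [e]; nlinarith [h1, h2]
    exact (mul_le_mul_iff_right₀ h2ε).mp key
  have hsat : σ / 2 * b ^ 2 - u * b ^ 2 ≤ σ / 2 * k0 ^ 2 := sat_lemma σ k0 b hσ0 hk0 hb0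
  have hqdd := hApos d
  have hεsplit : ε⁻¹ = 1 / (2 * ε) + 1 / (2 * ε) := by
    field_simp
    norm_num
  have hcσ : c / 2 ≤ σ / 4 := by
    rw [hc]; linarith
  have hstep : -(ε⁻¹ * a ^ 2) + c * a * b - u * b ^ 2 ≤
      -(1 / (2 * ε)) * a ^ 2 - σ / 4 * b ^ 2 + σ / 2 * k0 ^ 2 := by
    have h3 : c / 2 * b ^ 2 ≤ σ / 4 * b ^ 2 :=
      mul_le_mul_of_nonneg_right hcσ (sq_nonneg b)
    have hsplit2 : ε⁻¹ * a ^ 2 = 1 / (2 * ε) * a ^ 2 + 1 / (2 * ε) * a ^ 2 := by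
      rw [hεsplit]; ring
    linarith [hamgm, h3, hsat, hsplit2]
  -- final assembly
  rw [hH']
  have hcross : ⟪d, w⟫ - ⟪mvec A d, w⟫ ≤ c * a * b := by
    have : a * (b * θ) + lammax * (a * (b * θ)) = c * a * b := by rw [hc]; ring
    linarith [hdw, hAdw]
  linarith [hstep, hqdd, hdν, hνw, hcross]
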